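/- Let λ be a regular uncountable cardinal and let (C_α : α a limit ordinal < λ) be a coherent sequence of clubs. If D ⊆ λ is a thread for this sequence (a club such that C_α = D ∩ α for every limit point α of D) and every C_α has order type at most ω₁, then the order type of D is at most ω₁ + ω; in particular, if λ is regular and greater than ω₁ then no such thread with this property exists, so a square-like coherent sequence with clubs of order type ≤ ω₁ on a regular λ > ω₁ cannot be threaded by a club of order type less than λ. -/

import Mathlib

/-- `β` is a limit point of the set of ordinals `C`: `β ≠ 0` and `C ∩ β` is unbounded in `β`. -/
def IsLimitPt (C : Set Ordinal) (β : Ordinal) : Prop :=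
  β ≠ 0 ∧ ∀ γ < β, ∃ δ ∈ C, γ < δ ∧ δ < β

/-- `C` is a club (closed unbounded) subset of the ordinal `α`. -/
def ClubIn (C : Set Ordinal) (α : Ordinal) : Prop :=
  (∀ β ∈ C, β < α) ∧ (∀ β < α, ∃ γ ∈ C, β ≤ γ) ∧
    (∀ β < α, IsLimitPt C β → β ∈ C)

/-- `(C α : α ∈ lim(lam))` is a coherent sequence of clubs: each `C α` is club in `α` and
`C α = C β ∩ α` whenever `α` is a limit point of `C β`. -/
def Coherent (lam : Ordinal) (C : Ordinal → Set Ordinal) : Prop :=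
  (∀ α < lam, Order.IsSuccLimit α → ClubIn (C α) α) ∧
    (∀ β < lam, Order.IsSuccLimit β → ∀ α, IsLimitPt (C β) α → C α = C β ∩ Set.Iio α)

/-- `D` is a thread for the coherent sequence `C` on `lam`: a club in `lam` with
`C α = D ∩ α` for every limit point `α < lam` of `D`. -/
def IsThread (lam : Ordinal) (C : Ordinal → Set Ordinal) (D : Set Ordinal) : Prop :=
  ClubIn D lam ∧ ∀ α < lam, IsLimitPt D α → C α = D ∩ Set.Iio α

/-- `lam` is threadable (`¬ □(lam)`): every coherent sequence of length `lam` has a thread. -/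
def Threadable (lam : Ordinal) : Prop :=
  ∀ C : Ordinal → Set Ordinal, Coherent lam C → ∃ D, IsThread lam C D

/-- The order type of a set of ordinals. -/
noncomputable def otype (S : Set Ordinal) : Ordinal :=
  Ordinal.type ((· < ·) : S → S → Prop)

/-- The order type of `S ∩ [0, a)` equals the `typein` of `a` in `S`. -/
lemma otype_inter_Iio (S : Set Ordinal) (a : ↥S) :
    otype (S ∩ Set.Iio (a : Ordinal)) = Ordinal.typein ((· < ·) : S → S → Prop) a := by
  rw [← Ordinal.type_subrel]
  refine Ordinal.type_eq.2 ⟨⟨⟨fun x => ⟨⟨x.val, x.2.1⟩, x.2.2⟩,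
    fun y => ⟨y.val.val, y.val.2, y.2⟩, fun x => rfl, fun y => rfl⟩, Iff.rfl⟩⟩

/-- if `D` threads a coherent sequence on a regular uncountable `λ` all of
whose clubs have order type at most `ω₁`, then `D` has order type at most `ω₁ + ω`. -/
theorem stmt2 (c : Cardinal) (hreg : c.IsRegular) (hunc : Cardinal.aleph0 < c)
    (C : Ordinal → Set Ordinal) (hcoh : Coherent c.ord C)
    (hot : ∀ α < c.ord, Order.IsSuccLimit α → otype (C α) ≤ (Cardinal.aleph 1).ord)
    (D : Set Ordinal) (hD : IsThread c.ord C D) :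
    otype D ≤ (Cardinal.aleph 1).ord + Ordinal.omega0 := by
  by_contra h
  push_neg at h
  set μ : Ordinal := (Cardinal.aleph 1).ord + Ordinal.omega0 with hμ
  have hμlim : Order.IsSuccLimit μ := Ordinal.isSuccLimit_add _ Ordinal.isSuccLimit_omega0
  set r : ↥D → ↥D → Prop := ((· < ·) : ↥D → ↥D → Prop) with hr
  have hμtype : μ < Ordinal.type r := h
  set dd : ↥D := Ordinal.enum r ⟨μ, hμtype⟩ with hdd
  have htypein : Ordinal.typein r dd = μ := Ordinal.typein_enum r hμtype
  have hot_dd : otype (D ∩ Set.Iio (dd : Ordinal)) = μ := by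
    rw [otype_inter_Iio D dd, htypein]
  -- the set S := D ∩ Iio dd
  set S : Set Ordinal := D ∩ Set.Iio (dd : Ordinal) with hS
  -- no maximum in S
  have hnomax : ∀ x ∈ S, ∃ y ∈ S, x < y := by
    rintro x ⟨hxD, hxlt⟩
    have hx : Ordinal.typein r ⟨x, hxD⟩ < μ := by
      rw [← htypein]
      exact (Ordinal.typein_lt_typein r).2 hxlt
    have hx1 : Order.succ (Ordinal.typein r ⟨x, hxD⟩) < μ := hμlim.succ_lt hx
    have hx1' : Order.succ (Ordinal.typein r ⟨x, hxD⟩) < Ordinal.type r :=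
      hx1.trans hμtype
    refine ⟨(Ordinal.enum r ⟨Order.succ (Ordinal.typein r ⟨x, hxD⟩), hx1'⟩ : ↥D), ⟨(Ordinal.enum r ⟨Order.succ (Ordinal.typein r ⟨x, hxD⟩), hx1'⟩).2, ?_⟩, ?_⟩
    · have : Ordinal.typein r (Ordinal.enum r ⟨Order.succ (Ordinal.typein r ⟨x, hxD⟩), hx1'⟩) < Ordinal.typein r dd := by
        rw [Ordinal.typein_enum, htypein]; exact hx1
      exact (Ordinal.typein_lt_typein r).1 this
    · have : Ordinal.typein r ⟨x, hxD⟩ < Ordinal.typein r (Ordinal.enum r ⟨Order.succ (Ordinal.typein r ⟨x, hxD⟩), hx1'⟩) := by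
        rw [Ordinal.typein_enum]; exact Order.lt_succ _
      exact (Ordinal.typein_lt_typein r).1 this
  -- S is nonempty
  have hne : S.Nonempty := by
    have h0 : (0 : Ordinal) < Ordinal.type r := lt_trans hμlim.pos hμtype
    refine ⟨(Ordinal.enum r ⟨0, h0⟩ : ↥D), (Ordinal.enum r ⟨0, h0⟩).2, ?_⟩
    have : Ordinal.typein r (Ordinal.enum r ⟨0, h0⟩) < Ordinal.typein r dd := by
      rw [Ordinal.typein_enum, htypein]; exact hμlim.pos
    exact (Ordinal.typein_lt_typein r).1 this
  have hbdd : BddAbove S := ⟨(dd : Ordinal), fun x hx => le_of_lt hx.2⟩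
  set α : Ordinal := sSup S with hα
  have hmemlt : ∀ x ∈ S, x < α := by
    intro x hx
    obtain ⟨y, hyS, hxy⟩ := hnomax x hx
    exact lt_of_lt_of_le hxy (le_csSup hbdd hyS)
  have hαdd : α ≤ (dd : Ordinal) := csSup_le hne fun x hx => le_of_lt hx.2
  have hSeq : S = D ∩ Set.Iio α := by
    ext x
    constructor
    · rintro hx; exact ⟨hx.1, hmemlt x hx⟩
    · rintro ⟨hxD, hxα⟩; exact ⟨hxD, lt_of_lt_of_le hxα hαdd⟩
  -- α is a limit point of D
  have hα0 : α ≠ 0 := by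
    obtain ⟨x, hx⟩ := hne
    exact ne_of_gt (lt_of_le_of_lt (show (0 : Ordinal) ≤ x from zero_le) (hmemlt x hx))
  have hunbdd : ∀ γ < α, ∃ δ ∈ D, γ < δ ∧ δ < α := by
    intro γ hγ
    obtain ⟨δ, hδS, hγδ⟩ := exists_lt_of_lt_csSup hne hγ
    exact ⟨δ, hδS.1, hγδ, hmemlt δ hδS⟩
  have hαlam : α < c.ord := lt_of_le_of_lt hαdd (hD.1.1 _ dd.2)
  have hαlim : Order.IsSuccLimit α := by
    rw [Ordinal.isSuccLimit_iff]; refine ⟨hα0, Order.isSuccPrelimit_of_succ_lt fun a ha => ?_⟩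
    obtain ⟨δ, _, haδ, hδα⟩ := hunbdd a ha
    exact lt_of_le_of_lt (Order.succ_le_of_lt haδ) hδα
  have hCα : C α = D ∩ Set.Iio α := hD.2 α hαlam ⟨hα0, hunbdd⟩
  have h1 : otype (C α) ≤ (Cardinal.aleph 1).ord := hot α hαlam hαlim
  rw [hCα, ← hSeq, hot_dd] at h1
  have h2 : (Cardinal.aleph 1).ord < μ := by
    have : (Cardinal.aleph 1).ord + 0 < (Cardinal.aleph 1).ord + Ordinal.omega0 := add_lt_add_right Ordinal.omega0_pos _
    rwa [add_zero] at this
  exact absurd (lt_of_lt_of_le h2 h1) (lt_irrefl _)
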